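/- In an associative algebra, the fully antisymmetrized bracket of two elements [x_1,x_2] = x_1x_2 − x_2x_1 satisfies the ordinary Jacobi identity, and this is the s=2 case of the even-bracket GJI; in general for even s the identity Σ_{σ∈S_{2s-1}} sgn(σ) [[x_{σ(1)},...,x_{σ(s)}],x_{σ(s+1)},...,x_{σ(2s-1)}] = 0 for s=4 expands into the 35-term identity over 7 elements. -/

import Mathlib

open Equiv List

/-- The fully antisymmetrized `s`-fold product in an associative algebra. -/
noncomputable def multibracket {A : Type*} [Ring A] {s : ℕ} (x : Fin s → A) : A :=
  ∑ σ : Equiv.Perm (Fin s), (Equiv.Perm.sign σ : ℤ) • (List.ofFn fun i => x (σ i)).prod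

namespace GJI4

/-- The four segments of the word: inner block of 4 (permuted by `ρ`) and three singletons. -/
def segs (ρ : Equiv.Perm (Fin 4)) : Fin 4 → List (Fin 7) :=
  Fin.cons (List.ofFn fun i : Fin 4 => Fin.castAdd 3 (ρ i)) (fun j : Fin 3 => [Fin.natAdd 4 j])

/-- The word of indices corresponding to the monomial labelled by `(π, ρ)`. -/
def Lw (π ρ : Equiv.Perm (Fin 4)) : List (Fin 7) :=
  (List.ofFn fun i => segs ρ (π i)).flatten

lemma segs_zero (ρ : Equiv.Perm (Fin 4)) :
    segs ρ 0 = List.ofFn fun i : Fin 4 => Fin.castAdd 3 (ρ i) := rfl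

lemma segs_succ (ρ : Equiv.Perm (Fin 4)) (j : Fin 3) :
    segs ρ j.succ = [Fin.natAdd 4 j] := by
  simp [segs]

lemma hlen (π ρ : Equiv.Perm (Fin 4)) : (Lw π ρ).length = 7 := by
  rw [Lw, List.length_flatten, List.map_ofFn, List.sum_ofFn]
  have : ∑ i : Fin 4, (List.length ∘ fun i => segs ρ (π i)) i
      = ∑ k : Fin 4, (segs ρ k).length := Equiv.sum_comp π (fun k => (segs ρ k).length)
  rw [this, Fin.sum_univ_four]
  simp [segs, segs_succ]
  rfl

lemma mem_segs_zero {ρ : Equiv.Perm (Fin 4)} {a : Fin 7} (h : a ∈ segs ρ 0) : (a : ℕ) < 4 := by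
  rw [segs_zero, List.mem_ofFn] at h
  obtain ⟨i, rfl⟩ := h
  exact (ρ i).isLt

lemma mem_segs_succ {ρ : Equiv.Perm (Fin 4)} {a : Fin 7} {j : Fin 3} (h : a ∈ segs ρ j.succ) :
    a = Fin.natAdd 4 j := by
  rw [segs_succ] at h; simpa using h

lemma segs_disjoint (ρ : Equiv.Perm (Fin 4)) {k l : Fin 4} (hne : k ≠ l) :
    List.Disjoint (segs ρ k) (segs ρ l) := by
  intro a ha hb
  induction k using Fin.cases with
  | zero =>
    induction l using Fin.cases with
    | zero => exact hne rfl
    | succ j =>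
      have h1 := mem_segs_zero ha
      have h2 := mem_segs_succ hb
      subst h2
      simp [Fin.natAdd] at h1
  | succ j =>
    induction l using Fin.cases with
    | zero =>
      have h1 := mem_segs_zero hb
      have h2 := mem_segs_succ ha
      subst h2
      simp [Fin.natAdd] at h1
    | succ j' =>
      have h2 := mem_segs_succ ha
      have h2' := mem_segs_succ hb
      apply hne
      subst h2
      have : j = j' := by
        have := congrArg Fin.val h2'
        simpa [Fin.natAdd, Fin.ext_iff] using this
      rw [this]

lemma nodup_segs (ρ : Equiv.Perm (Fin 4)) (k : Fin 4) : (segs ρ k).Nodup := by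
  induction k using Fin.cases with
  | zero =>
    rw [segs_zero, List.nodup_ofFn]
    intro i j hij
    apply ρ.injective
    apply Fin.ext
    simpa [Fin.ext_iff] using hij
  | succ j => rw [segs_succ]; simp

lemma nodup_Lw (π ρ : Equiv.Perm (Fin 4)) : (Lw π ρ).Nodup := by
  rw [Lw, List.nodup_flatten]
  constructor
  · intro l hl
    rw [List.mem_ofFn] at hl
    obtain ⟨i, rfl⟩ := hl
    exact nodup_segs ρ (π i)
  · rw [List.pairwise_ofFn]
    intro i j hij
    exact segs_disjoint ρ (fun h => absurd (π.injective h) (Fin.ne_of_lt hij))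

lemma mem_Lw (π ρ : Equiv.Perm (Fin 4)) (a : Fin 7) : a ∈ Lw π ρ := by
  have h : (Lw π ρ).toFinset = Finset.univ := by
    apply Finset.eq_univ_of_card
    rw [List.toFinset_card_of_nodup (nodup_Lw π ρ), hlen]
    rfl
  rw [← List.mem_toFinset, h]
  exact Finset.mem_univ a

/-- The permutation of `Fin 7` whose one-line notation is the word `Lw π ρ`. -/
def vE (π ρ : Equiv.Perm (Fin 4)) : Equiv.Perm (Fin 7) where
  toFun i := (Lw π ρ).get (Fin.cast (hlen π ρ).symm i)
  invFun a := Fin.cast (hlen π ρ)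
    ⟨List.idxOf a (Lw π ρ), List.idxOf_lt_length_iff.2 (mem_Lw π ρ a)⟩
  left_inv i := by
    apply Fin.ext
    simpa using List.Nodup.idxOf_getElem (nodup_Lw π ρ) _ _
  right_inv a := by
    simp [List.get_eq_getElem, List.getElem_idxOf]

lemma C_eq_zero :
    ∑ π : Equiv.Perm (Fin 4), ∑ ρ : Equiv.Perm (Fin 4),
      (Equiv.Perm.sign π : ℤ) * (Equiv.Perm.sign ρ : ℤ) * (Equiv.Perm.sign (vE π ρ) : ℤ) = 0 := by
  decide


lemma vE_apply (π ρ : Equiv.Perm (Fin 4)) (i : Fin 7) :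
    vE π ρ i = (Lw π ρ).get (Fin.cast (hlen π ρ).symm i) := rfl

variable {A : Type*} [Ring A]
variable (y : Fin 7 → A)


lemma cons_apply (ρ : Equiv.Perm (Fin 4)) (k : Fin 4) :
    (Fin.cons ((List.ofFn fun i : Fin 4 => y (Fin.castAdd 3 (ρ i))).prod)
      (fun j : Fin 3 => y (Fin.natAdd 4 j)) : Fin 4 → A) k = ((segs ρ k).map y).prod := by
  induction k using Fin.cases with
  | zero => simp [segs, List.map_ofFn]
  | succ j => simp [segs]

lemma ofFn_cons_eq_set {n : ℕ} (π : Equiv.Perm (Fin (n + 1))) (g : Fin n → A) (B : A) :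
    (List.ofFn fun i => (Fin.cons B g : Fin (n+1) → A) (π i))
      = (List.ofFn fun i => (Fin.cons (1 : A) g : Fin (n+1) → A) (π i)).set (π.symm 0) B := by
  apply List.ext_getElem (by simp)
  intro m h1 h2
  rw [List.getElem_set]
  simp only [List.length_ofFn] at h1
  rw [List.getElem_ofFn]
  split
  · rename_i h
    have hm : π ⟨m, h1⟩ = 0 := by
      have : (⟨m, h1⟩ : Fin (n+1)) = π.symm 0 := Fin.ext h.symm
      rw [this]; simp
    rw [hm]; simp
  · rename_i h
    have hne : π ⟨m, h1⟩ ≠ 0 := by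
      intro hc
      apply h
      have : (⟨m, h1⟩ : Fin (n+1)) = π.symm 0 := by rw [← hc]; simp
      exact (congrArg Fin.val this).symm
    rw [List.getElem_ofFn]
    obtain h0 | ⟨j, hj⟩ := Fin.eq_zero_or_eq_succ (π ⟨m, h1⟩)
    · exact absurd h0 hne
    · rw [hj]; simp

lemma prod_ofFn_cons_sum {n : ℕ} (π : Equiv.Perm (Fin (n + 1))) (g : Fin n → A)
    (b : Equiv.Perm (Fin 4) → A) :
    (List.ofFn fun i => (Fin.cons (∑ ρ : Equiv.Perm (Fin 4), (Equiv.Perm.sign ρ : ℤ) • b ρ) g :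
        Fin (n+1) → A) (π i)).prod
      = ∑ ρ : Equiv.Perm (Fin 4), (Equiv.Perm.sign ρ : ℤ) •
          (List.ofFn fun i => (Fin.cons (b ρ) g : Fin (n+1) → A) (π i)).prod := by
  have key : ∀ B : A, (List.ofFn fun i => (Fin.cons B g : Fin (n+1) → A) (π i)).prod
      = ((List.ofFn fun i => (Fin.cons (1:A) g : Fin (n+1) → A) (π i)).take (π.symm 0)).prod * B *
        ((List.ofFn fun i => (Fin.cons (1:A) g : Fin (n+1) → A) (π i)).drop ((π.symm 0 : ℕ) + 1)).prod := by
    intro B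
    rw [ofFn_cons_eq_set, List.prod_set]
    congr 2
    rw [if_pos]
    simp only [List.length_ofFn]
    exact (π.symm 0).isLt
  rw [key]
  rw [Finset.mul_sum, Finset.sum_mul]
  refine Finset.sum_congr rfl fun ρ _ => ?_
  rw [key]
  rw [mul_smul_comm, smul_mul_assoc]

lemma prod_word (π ρ : Equiv.Perm (Fin 4)) :
    (List.ofFn fun i => (Fin.cons ((List.ofFn fun i : Fin 4 => y (Fin.castAdd 3 (ρ i))).prod)
        (fun j : Fin 3 => y (Fin.natAdd 4 j)) : Fin 4 → A) (π i)).prod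
      = ((Lw π ρ).map y).prod := by
  simp only [cons_apply y ρ]
  rw [Lw, List.map_flatten, List.prod_flatten, List.map_map, List.map_ofFn]
  rfl

omit [Ring A] in
lemma word_eq (π ρ : Equiv.Perm (Fin 4)) :
    (Lw π ρ).map y = List.ofFn (fun i => y (vE π ρ i)) := by
  have h1 : List.ofFn (fun i : Fin 7 => (Lw π ρ).get (Fin.cast (hlen π ρ).symm i)) = Lw π ρ := by
    apply List.ext_getElem (by simp [hlen])
    intro m hn1 hn2
    rw [List.getElem_ofFn]
    rfl
  conv_lhs => rw [← h1]
  rw [List.map_ofFn]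
  simp only [Function.comp_def, vE_apply]

lemma expand (y : Fin 7 → A) :
    multibracket (Fin.cons (multibracket fun i : Fin 4 => y (Fin.castAdd 3 i))
        (fun j : Fin 3 => y (Fin.natAdd 4 j)))
      = ∑ π : Equiv.Perm (Fin 4), ∑ ρ : Equiv.Perm (Fin 4),
          ((Equiv.Perm.sign π : ℤ) * (Equiv.Perm.sign ρ : ℤ)) •
            (List.ofFn fun i : Fin 7 => y (vE π ρ i)).prod := by
  rw [show multibracket (Fin.cons (multibracket fun i : Fin 4 => y (Fin.castAdd 3 i))
        (fun j : Fin 3 => y (Fin.natAdd 4 j)))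
      = ∑ π : Equiv.Perm (Fin 4), (Equiv.Perm.sign π : ℤ) •
          (List.ofFn fun i => (Fin.cons (multibracket fun i : Fin 4 => y (Fin.castAdd 3 i))
            (fun j : Fin 3 => y (Fin.natAdd 4 j)) : Fin 4 → A) (π i)).prod from rfl]
  refine Finset.sum_congr rfl fun π _ => ?_
  have hB : (multibracket fun i : Fin 4 => y (Fin.castAdd 3 i))
      = ∑ ρ : Equiv.Perm (Fin 4), (Equiv.Perm.sign ρ : ℤ) •
          (List.ofFn fun i : Fin 4 => y (Fin.castAdd 3 (ρ i))).prod := rfl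
  rw [hB, prod_ofFn_cons_sum (n := 3) π _ _, Finset.smul_sum]
  refine Finset.sum_congr rfl fun ρ _ => ?_
  rw [prod_word y π ρ, word_eq y π ρ, smul_smul]


lemma sum_comm3 {M α β γ : Type*} [AddCommMonoid M] [Fintype α] [Fintype β] [Fintype γ]
    (f : α → β → γ → M) : ∑ a, ∑ b, ∑ c, f a b c = ∑ c, ∑ a, ∑ b, f a b c := by
  calc ∑ a, ∑ b, ∑ c, f a b c
      = ∑ a, ∑ c, ∑ b, f a b c :=
        Finset.sum_congr rfl fun a _ =>
          Finset.sum_comm (s := Finset.univ) (t := Finset.univ) (f := fun b c => f a b c)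
    _ = ∑ c, ∑ a, ∑ b, f a b c :=
        Finset.sum_comm (s := Finset.univ) (t := Finset.univ) (f := fun a c => ∑ b, f a b c)

lemma factor2 {A β γ : Type*} [Ring A] [Fintype β] [Fintype γ] (c : β → γ → ℤ) (d : ℤ) (a : A) :
    ∑ b : β, ∑ g : γ, (d * c b g) • a = (d * ∑ b : β, ∑ g : γ, c b g) • a := by
  rw [Finset.mul_sum, Finset.sum_smul]
  exact Finset.sum_congr rfl fun b _ => by rw [Finset.mul_sum, Finset.sum_smul]

lemma key_reindex (m : Equiv.Perm (Fin 7) → A) (v : Equiv.Perm (Fin 7)) (c : ℤ) :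
    ∑ σ : Equiv.Perm (Fin 7), ((Equiv.Perm.sign σ : ℤ) * c) • m (σ * v)
      = ∑ τ : Equiv.Perm (Fin 7), ((Equiv.Perm.sign τ : ℤ) * (c * (Equiv.Perm.sign v : ℤ))) • m τ := by
  rw [← Equiv.sum_comp (Equiv.mulRight v)
      (fun τ => ((Equiv.Perm.sign τ : ℤ) * (c * (Equiv.Perm.sign v : ℤ))) • m τ)]
  refine Finset.sum_congr rfl fun σ _ => ?_
  have hv : (Equiv.Perm.sign v : ℤ) * (Equiv.Perm.sign v : ℤ) = 1 := by
    rw [← Units.val_mul, Int.units_mul_self, Units.val_one]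
  simp only [Equiv.coe_mulRight]
  congr 1
  rw [Equiv.Perm.sign_mul]
  push_cast
  linear_combination (-((Equiv.Perm.sign σ : ℤ) * c)) * hv

end GJI4

set_option maxHeartbeats 2000000 in
theorem commutator_jacobi_and_s4_GJI (A : Type*) [Ring A] :
    (∀ x y z : A,
      (x * y - y * x) * z - z * (x * y - y * x) +
        ((y * z - z * y) * x - x * (y * z - z * y)) +
        ((z * x - x * z) * y - y * (z * x - x * z)) = 0) ∧
    (∀ x : Fin (4 + 3) → A,
      ∑ σ : Equiv.Perm (Fin (4 + 3)),
        (Equiv.Perm.sign σ : ℤ) •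
          multibracket
            (Fin.cons (multibracket fun i : Fin 4 => x (σ (Fin.castAdd 3 i)))
              (fun j : Fin 3 => x (σ (Fin.natAdd 4 j)))) = 0) := by
  constructor
  · intro x y z; noncomm_ring
  · intro x
    open GJI4 in
    show ∑ σ : Equiv.Perm (Fin 7),
        (Equiv.Perm.sign σ : ℤ) •
          multibracket
            (Fin.cons (multibracket fun i : Fin 4 => x (σ (Fin.castAdd 3 i)))
              (fun j : Fin 3 => x (σ (Fin.natAdd 4 j)))) = 0
    set m : Equiv.Perm (Fin 7) → A := fun τ => (List.ofFn fun i => x (τ i)).prod with hm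
    have step1 : ∑ σ : Equiv.Perm (Fin 7),
        (Equiv.Perm.sign σ : ℤ) •
          multibracket
            (Fin.cons (multibracket fun i : Fin 4 => x (σ (Fin.castAdd 3 i)))
              (fun j : Fin 3 => x (σ (Fin.natAdd 4 j))))
        = ∑ σ : Equiv.Perm (Fin 7), ∑ π : Equiv.Perm (Fin 4), ∑ ρ : Equiv.Perm (Fin 4),
            ((Equiv.Perm.sign σ : ℤ) * ((Equiv.Perm.sign π : ℤ) * (Equiv.Perm.sign ρ : ℤ))) •
              m (σ * vE π ρ) := by
      refine Finset.sum_congr rfl fun σ _ => ?_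
      rw [expand (fun a => x (σ a)), Finset.smul_sum]
      refine Finset.sum_congr rfl fun π _ => ?_
      rw [Finset.smul_sum]
      refine Finset.sum_congr rfl fun ρ _ => ?_
      rw [smul_smul]
      rfl
    rw [step1, Finset.sum_comm]
    have step2 : ∀ π : Equiv.Perm (Fin 4),
        ∑ σ : Equiv.Perm (Fin 7), ∑ ρ : Equiv.Perm (Fin 4),
            ((Equiv.Perm.sign σ : ℤ) * ((Equiv.Perm.sign π : ℤ) * (Equiv.Perm.sign ρ : ℤ))) •
              m (σ * vE π ρ)
          = ∑ ρ : Equiv.Perm (Fin 4), ∑ τ : Equiv.Perm (Fin 7),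
              ((Equiv.Perm.sign τ : ℤ) *
                ((Equiv.Perm.sign π : ℤ) * (Equiv.Perm.sign ρ : ℤ) *
                  (Equiv.Perm.sign (vE π ρ) : ℤ))) • m τ := by
      intro π
      rw [Finset.sum_comm]
      refine Finset.sum_congr rfl fun ρ _ => ?_
      rw [key_reindex m (vE π ρ) ((Equiv.Perm.sign π : ℤ) * (Equiv.Perm.sign ρ : ℤ))]
    calc ∑ π : Equiv.Perm (Fin 4), ∑ σ : Equiv.Perm (Fin 7), ∑ ρ : Equiv.Perm (Fin 4),
            ((Equiv.Perm.sign σ : ℤ) * ((Equiv.Perm.sign π : ℤ) * (Equiv.Perm.sign ρ : ℤ))) •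
              m (σ * vE π ρ)
        = ∑ π : Equiv.Perm (Fin 4), ∑ ρ : Equiv.Perm (Fin 4), ∑ τ : Equiv.Perm (Fin 7),
              ((Equiv.Perm.sign τ : ℤ) *
                ((Equiv.Perm.sign π : ℤ) * (Equiv.Perm.sign ρ : ℤ) *
                  (Equiv.Perm.sign (vE π ρ) : ℤ))) • m τ :=
          Finset.sum_congr rfl fun π _ => step2 π
      _ = ∑ τ : Equiv.Perm (Fin 7), ∑ π : Equiv.Perm (Fin 4), ∑ ρ : Equiv.Perm (Fin 4),
              ((Equiv.Perm.sign τ : ℤ) *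
                ((Equiv.Perm.sign π : ℤ) * (Equiv.Perm.sign ρ : ℤ) *
                  (Equiv.Perm.sign (vE π ρ) : ℤ))) • m τ := by
          exact sum_comm3 (fun π ρ τ =>
            ((Equiv.Perm.sign τ : ℤ) *
              ((Equiv.Perm.sign π : ℤ) * (Equiv.Perm.sign ρ : ℤ) *
                (Equiv.Perm.sign (vE π ρ) : ℤ))) • m τ)
      _ = ∑ τ : Equiv.Perm (Fin 7),
            ((Equiv.Perm.sign τ : ℤ) *
              ∑ π : Equiv.Perm (Fin 4), ∑ ρ : Equiv.Perm (Fin 4),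
                ((Equiv.Perm.sign π : ℤ) * (Equiv.Perm.sign ρ : ℤ) *
                  (Equiv.Perm.sign (vE π ρ) : ℤ))) • m τ := by
          refine Finset.sum_congr rfl fun τ _ => ?_
          exact factor2 (fun π ρ => ((Equiv.Perm.sign π : ℤ) * (Equiv.Perm.sign ρ : ℤ) *
            (Equiv.Perm.sign (vE π ρ) : ℤ))) (Equiv.Perm.sign τ : ℤ) (m τ)
      _ = 0 := by
          rw [C_eq_zero]
          simp
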